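/- Let Ω ⊆ ℝ² satisfy property (i). Then: (1) Ω has property (*) if and only if its antipolar Ω^◇ has property (**); (2) Ω^◇ has property (*) if and only if Ω has property (**). -/

import Mathlib

open scoped Pointwise

/-- The antipolar of a set `Ω ⊆ ℝ²`:
`Ω^◇ = {(p,q) : p·x − q·y ≥ 1 for all (x,y) ∈ Ω}`. -/
def antipolar (Ω : Set (ℝ × ℝ)) : Set (ℝ × ℝ) :=
  {pq | ∀ xy ∈ Ω, 1 ≤ pq.1 * xy.1 - pq.2 * xy.2}

/-- Property (i): `Ω` is nonempty, convex, closed, does not contain the origin,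
and has the ray property `λΩ ⊆ Ω` for every `λ > 1`. -/
def PropI (Ω : Set (ℝ × ℝ)) : Prop :=
  Ω.Nonempty ∧ Convex ℝ Ω ∧ IsClosed Ω ∧ (0 : ℝ × ℝ) ∉ Ω ∧
    ∀ c : ℝ, 1 < c → c • Ω ⊆ Ω

/-- Property (*): no ray from the origin lies on the boundary of `Ω`,
i.e. `λΩ ∩ ∂Ω = ∅` for all `λ > 1`. -/
def PropStar (Ω : Set (ℝ × ℝ)) : Prop :=
  ∀ c : ℝ, 1 < c → (c • Ω) ∩ frontier Ω = ∅

/-- The closed cone generated by `Ω`: `C = closure(ℝ₊Ω)`. -/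
def posCone (Ω : Set (ℝ × ℝ)) : Set (ℝ × ℝ) :=
  closure {x | ∃ t : ℝ, 0 ≤ t ∧ ∃ ω ∈ Ω, x = t • ω}

/-- `e` is a direction of a boundary ray of `C`: `e ≠ 0` and the whole ray
`ℝ₊ e` is contained in the frontier of `C`. -/
def IsBoundaryRayDir (C : Set (ℝ × ℝ)) (e : ℝ × ℝ) : Prop :=
  e ≠ 0 ∧ ∀ t : ℝ, 0 ≤ t → t • e ∈ frontier C

/-- Property (**): the boundary `∂Ω` comes arbitrarily close to each boundary
ray of the cone `C = closure(ℝ₊Ω)`, i.e. `dist(l₀, Ω) = dist(l₁, Ω) = 0`. -/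
def PropSS (Ω : Set (ℝ × ℝ)) : Prop :=
  ∀ e : ℝ × ℝ, IsBoundaryRayDir (posCone Ω) e →
    ∀ ε : ℝ, 0 < ε → ∃ t : ℝ, 0 ≤ t ∧ ∃ b ∈ Ω, dist (t • e) b < ε

set_option maxHeartbeats 1000000

open Filter Topology Set Bornology

namespace DP

/-- dot product on ℝ × ℝ -/
def dot (u v : ℝ × ℝ) : ℝ := u.1 * v.1 + u.2 * v.2

lemma dot_comm (u v : ℝ × ℝ) : dot u v = dot v u := by simp [dot]; ring

lemma dot_add_right (u v w : ℝ × ℝ) : dot u (v + w) = dot u v + dot u w := by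
  simp [dot]; ring

lemma dot_add_left (u v w : ℝ × ℝ) : dot (u + v) w = dot u w + dot v w := by
  simp [dot]; ring

lemma dot_smul_right (u : ℝ × ℝ) (c : ℝ) (v : ℝ × ℝ) : dot u (c • v) = c * dot u v := by
  simp [dot, Prod.smul_def, smul_eq_mul]; ring

lemma dot_smul_left (c : ℝ) (u v : ℝ × ℝ) : dot (c • u) v = c * dot u v := by
  simp [dot, Prod.smul_def, smul_eq_mul]; ring

lemma norm_pair_le {v : ℝ × ℝ} {c : ℝ} (h1 : |v.1| ≤ c) (h2 : |v.2| ≤ c) : ‖v‖ ≤ c := by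
  rw [Prod.norm_def]
  simp [Real.norm_eq_abs]
  exact ⟨h1, h2⟩

lemma abs_dot_le (u v : ℝ × ℝ) : |dot u v| ≤ (|u.1| + |u.2|) * ‖v‖ := by
  have h1 : |v.1| ≤ ‖v‖ := by rw [Prod.norm_def]; exact le_trans (le_max_left _ _) (le_of_eq rfl)
  have h2 : |v.2| ≤ ‖v‖ := by rw [Prod.norm_def]; exact le_max_right _ _
  calc |dot u v| ≤ |u.1 * v.1| + |u.2 * v.2| := abs_add_le _ _
    _ = |u.1| * |v.1| + |u.2| * |v.2| := by rw [abs_mul, abs_mul]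
    _ ≤ |u.1| * ‖v‖ + |u.2| * ‖v‖ := by
        have := abs_nonneg u.1
        have := abs_nonneg u.2
        gcongr
    _ = (|u.1| + |u.2|) * ‖v‖ := by ring

/-- continuity of dot in the second variable along a sequence, first variable also varying -/
lemma tendsto_dot {u v : ℕ → ℝ × ℝ} {a b : ℝ × ℝ}
    (hu : Tendsto u atTop (𝓝 a)) (hv : Tendsto v atTop (𝓝 b)) :
    Tendsto (fun k => dot (u k) (v k)) atTop (𝓝 (dot a b)) := by
  have h1 : Tendsto (fun k => (u k).1) atTop (𝓝 a.1) := (continuous_fst.tendsto a).comp hu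
  have h2 : Tendsto (fun k => (u k).2) atTop (𝓝 a.2) := (continuous_snd.tendsto a).comp hu
  have h3 : Tendsto (fun k => (v k).1) atTop (𝓝 b.1) := (continuous_fst.tendsto b).comp hv
  have h4 : Tendsto (fun k => (v k).2) atTop (𝓝 b.2) := (continuous_snd.tendsto b).comp hv
  exact (h1.mul h3).add (h2.mul h4)

/-- separation of a point from a closed convex set, in dot-product form -/
lemma sep_point {Ω : Set (ℝ × ℝ)} (hconv : Convex ℝ Ω) (hcl : IsClosed Ω)
    {x : ℝ × ℝ} (hx : x ∉ Ω) :
    ∃ ν : ℝ × ℝ, ∃ s : ℝ, dot ν x < s ∧ ∀ w ∈ Ω, s < dot ν w := by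
  obtain ⟨f, s, hfx, hfw⟩ := geometric_hahn_banach_point_closed hconv hcl hx
  have key : ∀ y : ℝ × ℝ, dot (f (1, 0), f (0, 1)) y = f y := by
    intro y
    have hy : y = y.1 • ((1:ℝ), (0:ℝ)) + y.2 • ((0:ℝ), (1:ℝ)) := by
      simp [Prod.ext_iff]
    have h2 := congrArg f hy
    rw [map_add, map_smul, map_smul, smul_eq_mul, smul_eq_mul] at h2
    rw [h2]; simp [dot]; ring
  refine ⟨(f (1, 0), f (0, 1)), s, ?_, fun w hw => ?_⟩
  · rw [key]; exact hfx
  · rw [key]; exact hfw w hw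

/-- a linear functional bounded below on a set with the ray property is nonneg on it -/
lemma ray_nonneg {Ω : Set (ℝ × ℝ)} (hray : ∀ c : ℝ, 1 < c → c • Ω ⊆ Ω)
    {ν : ℝ × ℝ} {s : ℝ} (hbdd : ∀ w ∈ Ω, s ≤ dot ν w) : ∀ w ∈ Ω, 0 ≤ dot ν w := by
  intro w hw
  by_contra hneg
  push_neg at hneg
  -- choose c large
  set c : ℝ := max 2 ((s - 1) / dot ν w) with hc
  have hc1 : (1:ℝ) < c := lt_of_lt_of_le one_lt_two (le_max_left _ _)
  have hcw : c • w ∈ Ω := hray c hc1 (Set.smul_mem_smul_set hw)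
  have h1 : s ≤ dot ν (c • w) := hbdd _ hcw
  rw [dot_smul_right] at h1
  have h2 : (s - 1) / dot ν w ≤ c := le_max_right _ _
  -- multiply by negative number flips
  have h3 : c * dot ν w ≤ ((s - 1) / dot ν w) * dot ν w := by
    exact mul_le_mul_of_nonpos_right h2 (le_of_lt hneg)
  have h4 : ((s - 1) / dot ν w) * dot ν w = s - 1 :=
    div_mul_cancel₀ _ (ne_of_lt hneg)
  linarith

/-- a point on the boundary line of a halfplane containing S is not in the interior of S -/
lemma not_interior_of_halfplane {S : Set (ℝ × ℝ)} {ξ x : ℝ × ℝ}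
    (hS : ∀ v ∈ S, 0 ≤ dot ξ v) (hξ : ξ ≠ 0) (hx : dot ξ x = 0) : x ∉ interior S := by
  intro hint
  rw [mem_interior_iff_mem_nhds, Metric.mem_nhds_iff] at hint
  obtain ⟨ρ, hρ, hball⟩ := hint
  have hξn : 0 < ‖ξ‖ := norm_pos_iff.2 hξ
  set τ : ℝ := ρ / (2 * ‖ξ‖) with hτ
  have hτpos : 0 < τ := by positivity
  have hmem : x - τ • ξ ∈ Metric.ball x ρ := by
    rw [Metric.mem_ball, dist_eq_norm]
    have : x - τ • ξ - x = -(τ • ξ) := by abel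
    rw [this, norm_neg, norm_smul, Real.norm_eq_abs, abs_of_pos hτpos]
    rw [hτ]
    rw [div_mul_eq_mul_div, mul_comm]
    rw [div_lt_iff₀ (by positivity)]
    nlinarith
  have h0 : 0 ≤ dot ξ (x - τ • ξ) := hS _ (hball hmem)
  have hexp : dot ξ (x - τ • ξ) = dot ξ x - τ * dot ξ ξ := by
    simp [dot, Prod.smul_def, smul_eq_mul]; ring
  have hξξ : 0 < dot ξ ξ := by
    have : ξ.1 ≠ 0 ∨ ξ.2 ≠ 0 := by
      by_contra hcon
      push_neg at hcon
      exact hξ (Prod.ext hcon.1 hcon.2)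
    have n1 := mul_self_nonneg ξ.1
    have n2 := mul_self_nonneg ξ.2
    rcases this with h | h
    · have := mul_self_pos.2 h
      simp only [dot]; nlinarith
    · have := mul_self_pos.2 h
      simp only [dot]; nlinarith
  nlinarith [hξξ]

/-! ### The antipolar -/

/-- the reflection (x, y) ↦ (x, -y) -/
def Jm (u : ℝ × ℝ) : ℝ × ℝ := (u.1, -u.2)

@[simp] lemma Jm_Jm (u : ℝ × ℝ) : Jm (Jm u) = u := by simp [Jm]

lemma Jm_eq_zero {u : ℝ × ℝ} : Jm u = 0 ↔ u = 0 := by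
  constructor
  · intro h
    have := congrArg Jm h
    simpa [Jm, Prod.ext_iff] using this
  · intro h; simp [h, Jm, Prod.ext_iff]

lemma norm_Jm (u : ℝ × ℝ) : ‖Jm u‖ = ‖u‖ := by
  simp [Jm, Prod.norm_def, Real.norm_eq_abs, abs_neg]

lemma Jm_smul (c : ℝ) (u : ℝ × ℝ) : Jm (c • u) = c • Jm u := by
  simp [Jm, Prod.smul_def, smul_eq_mul, Prod.ext_iff]

lemma Jm_sub (u v : ℝ × ℝ) : Jm (u - v) = Jm u - Jm v := by
  simp [Jm, Prod.ext_iff]; ring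

lemma mem_antipolar {Ω : Set (ℝ × ℝ)} {u : ℝ × ℝ} :
    u ∈ antipolar Ω ↔ ∀ w ∈ Ω, 1 ≤ dot (Jm u) w := by
  constructor
  · intro h w hw
    have := h w hw
    simp only [dot, Jm]
    linarith
  · intro h w hw
    have := h w hw
    simp only [dot, Jm] at this
    linarith

lemma antipolar_convex (Ω : Set (ℝ × ℝ)) : Convex ℝ (antipolar Ω) := by
  intro u hu v hv a b ha hb hab
  rw [mem_antipolar] at hu hv ⊢
  intro w hw
  have h1 := hu w hw
  have h2 := hv w hw
  have : dot (Jm (a • u + b • v)) w = a * dot (Jm u) w + b * dot (Jm v) w := by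
    simp [Jm, dot, Prod.smul_def, smul_eq_mul]; ring
  rw [this]
  nlinarith

lemma antipolar_closed (Ω : Set (ℝ × ℝ)) : IsClosed (antipolar Ω) := by
  have : antipolar Ω = ⋂ w ∈ Ω, {u : ℝ × ℝ | 1 ≤ u.1 * w.1 - u.2 * w.2} := by
    ext u; simp [antipolar]
  rw [this]
  refine isClosed_biInter fun w _ => ?_
  have : Continuous fun u : ℝ × ℝ => u.1 * w.1 - u.2 * w.2 := by fun_prop
  exact isClosed_le continuous_const this

lemma antipolar_zero_not_mem {Ω : Set (ℝ × ℝ)} (hne : Ω.Nonempty) :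
    (0 : ℝ × ℝ) ∉ antipolar Ω := by
  obtain ⟨w, hw⟩ := hne
  intro h
  have := mem_antipolar.mp h w hw
  simp [Jm, dot] at this
  linarith

lemma antipolar_ray (Ω : Set (ℝ × ℝ)) : ∀ c : ℝ, 1 < c → c • antipolar Ω ⊆ antipolar Ω := by
  intro c hc x hx
  obtain ⟨u, hu, rfl⟩ := hx
  rw [mem_antipolar] at hu ⊢
  intro w hw
  rw [Jm_smul, dot_smul_left]
  have := hu w hw
  nlinarith

lemma antipolar_nonempty {Ω : Set (ℝ × ℝ)} (hΩ : PropI Ω) : (antipolar Ω).Nonempty := by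
  obtain ⟨hne, hconv, hcl, h0, hray⟩ := hΩ
  obtain ⟨ν, s, h1, h2⟩ := sep_point hconv hcl h0
  have hs : 0 < s := by simpa [dot] using h1
  refine ⟨Jm (s⁻¹ • ν), ?_⟩
  rw [mem_antipolar]
  intro w hw
  rw [Jm_Jm, dot_smul_left]
  have h3 := h2 w hw
  have h4 : 1 ≤ dot ν w / s := (one_le_div hs).2 (le_of_lt h3)
  calc (1:ℝ) ≤ dot ν w / s := h4
    _ = s⁻¹ * dot ν w := by ring

lemma antipolar_propI {Ω : Set (ℝ × ℝ)} (hΩ : PropI Ω) : PropI (antipolar Ω) :=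
  ⟨antipolar_nonempty hΩ, antipolar_convex Ω, antipolar_closed Ω,
    antipolar_zero_not_mem hΩ.1, antipolar_ray Ω⟩

/-- Bipolar theorem -/
lemma bipolar {Ω : Set (ℝ × ℝ)} (hΩ : PropI Ω) : antipolar (antipolar Ω) = Ω := by
  obtain ⟨hne, hconv, hcl, h0, hray⟩ := hΩ
  apply Set.Subset.antisymm
  · intro v hv
    by_contra hvΩ
    obtain ⟨ν, s, h1, h2⟩ := sep_point hconv hcl hvΩ
    have hnn : ∀ w ∈ Ω, 0 ≤ dot ν w := ray_nonneg hray fun w hw => (h2 w hw).le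
    rw [mem_antipolar] at hv
    rcases lt_or_ge 0 s with hs | hs
    · -- s > 0 : u := Jm (s⁻¹ • ν) ∈ antipolar Ω and dot at v < 1
      have hu : Jm (s⁻¹ • ν) ∈ antipolar Ω := by
        rw [mem_antipolar]
        intro w hw
        rw [Jm_Jm, dot_smul_left]
        have := h2 w hw
        have h3 : 1 ≤ dot ν w / s := (one_le_div hs).2 this.le
        calc (1:ℝ) ≤ dot ν w / s := h3
          _ = s⁻¹ * dot ν w := by ring
      have hv1 := hv _ hu
      have e1 : dot (Jm v) (Jm (s⁻¹ • ν)) = s⁻¹ * dot ν v := by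
        simp [Jm, dot, Prod.smul_def, smul_eq_mul]; ring
      rw [e1] at hv1
      have hlt : s⁻¹ * dot ν v < 1 := by
        rw [inv_mul_eq_div, div_lt_one hs]; exact h1
      linarith
    · -- s ≤ 0 : push with u₀ + λ Jm ν
      obtain ⟨u₀, hu₀⟩ := antipolar_nonempty ⟨hne, hconv, hcl, h0, hray⟩
      have hνv : dot ν v < 0 := lt_of_lt_of_le h1 hs
      set lam : ℝ := (|dot (Jm u₀) v| + 1) / (-dot ν v) with hlam
      have hdpos : 0 < -dot ν v := by linarith
      have hlampos : 0 < lam := by positivity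
      have humem : u₀ + lam • Jm ν ∈ antipolar Ω := by
        rw [mem_antipolar] at hu₀ ⊢
        intro w hw
        have e1 : dot (Jm (u₀ + lam • Jm ν)) w
            = dot (Jm u₀) w + lam * dot ν w := by
          simp [Jm, dot, Prod.smul_def, smul_eq_mul]; ring
        rw [e1]
        have := hu₀ w hw
        have := hnn w hw
        nlinarith
      have hv2 := hv _ humem
      have e2 : dot (Jm v) (u₀ + lam • Jm ν) = dot (Jm u₀) v + lam * dot ν v := by
        simp [Jm, dot, Prod.smul_def, smul_eq_mul]; ring
      rw [e2] at hv2
      replace this := hv2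
      have e3 : lam * dot ν v = -(|dot (Jm u₀) v| + 1) := by
        rw [hlam]
        have hνvne : dot ν v ≠ 0 := ne_of_lt hνv
        field_simp
      rw [e3] at this
      have := abs_nonneg (dot (Jm u₀) v)
      have h4 : dot (Jm u₀) v ≤ |dot (Jm u₀) v| := le_abs_self _
      linarith
  · intro w hw
    rw [mem_antipolar]
    intro u hu
    have := mem_antipolar.mp hu w hw
    -- dot (Jm w) u = dot (Jm u) w
    have e : dot (Jm w) u = dot (Jm u) w := by simp [Jm, dot]; ring
    rwa [e]

lemma dot_sub_right (u v w : ℝ × ℝ) : dot u (v - w) = dot u v - dot u w := by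
  simp [dot]; ring

lemma dot_Jm_swap (a b : ℝ × ℝ) : dot (Jm a) b = dot (Jm b) a := by
  simp [Jm, dot]; ring

lemma abs_sum_pos {ω : ℝ × ℝ} (h : ω ≠ 0) : 0 < |ω.1| + |ω.2| := by
  rcases lt_or_ge 0 (|ω.1| + |ω.2|) with h1 | h1
  · exact h1
  · exfalso
    have a1 := abs_nonneg ω.1
    have a2 := abs_nonneg ω.2
    have : |ω.1| = 0 ∧ |ω.2| = 0 := ⟨by linarith, by linarith⟩
    exact h (Prod.ext (abs_eq_zero.mp this.1) (abs_eq_zero.mp this.2))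

lemma tendsto_one_div_succ : Tendsto (fun k : ℕ => 1 / ((k : ℝ) + 1)) atTop (𝓝 0) :=
  tendsto_one_div_add_atTop_nhds_zero_nat

/-- supporting line at a frontier point of a closed convex set -/
lemma support_frontier {Ω : Set (ℝ × ℝ)} (hconv : Convex ℝ Ω) (hcl : IsClosed Ω)
    (hne : Ω.Nonempty) {x : ℝ × ℝ} (hx : x ∈ frontier Ω) :
    ∃ ν : ℝ × ℝ, ν ≠ 0 ∧ ∀ w ∈ Ω, dot ν x ≤ dot ν w := by
  obtain ⟨w₀, hw₀⟩ := hne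
  have hxint : x ∉ interior Ω := by
    rw [IsClosed.frontier_eq hcl] at hx
    exact hx.2
  -- points outside Ω approaching x
  have hz : ∀ j : ℕ, ∃ z : ℝ × ℝ, z ∉ Ω ∧ dist z x < 1 / ((j : ℝ) + 1) := by
    intro j
    by_contra hcon
    push_neg at hcon
    apply hxint
    rw [mem_interior_iff_mem_nhds, Metric.mem_nhds_iff]
    refine ⟨1 / ((j : ℝ) + 1), by positivity, fun y hy => ?_⟩
    by_contra hyΩ
    have h1 := hcon y hyΩ
    rw [Metric.mem_ball] at hy
    linarith
  choose z hzout hzdist using hz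
  -- separating functionals
  have hsep : ∀ j : ℕ, ∃ ν : ℝ × ℝ, ν ≠ 0 ∧ ∀ w ∈ Ω, 0 < dot ν (w - z j) := by
    intro j
    obtain ⟨ν, s, h1, h2⟩ := sep_point hconv hcl (hzout j)
    refine ⟨ν, ?_, fun w hw => ?_⟩
    · intro hν0
      rw [hν0] at h1 h2
      have := h2 w₀ hw₀
      simp [dot] at h1 this
      linarith
    · rw [dot_sub_right]
      have := h2 w hw
      linarith
  choose ν hν0 hνpos using hsep
  set νn : ℕ → ℝ × ℝ := fun j => ‖ν j‖⁻¹ • ν j with hνn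
  have hνnorm : ∀ j, ‖νn j‖ = 1 := by
    intro j
    rw [hνn]
    simp [norm_smul, Real.norm_eq_abs, abs_of_pos (inv_pos.2 (norm_pos_iff.2 (hν0 j)))]
    rw [inv_mul_cancel₀ (norm_ne_zero_iff.2 (hν0 j))]
  have hmem : ∀ j, νn j ∈ Metric.closedBall (0 : ℝ × ℝ) 1 := by
    intro j
    rw [Metric.mem_closedBall, dist_zero_right, hνnorm]
  obtain ⟨νl, hνl, φ, hφmono, hφtend⟩ :=
    tendsto_subseq_of_bounded Metric.isBounded_closedBall hmem
  -- z (φ k) → x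
  have hztend : Tendsto (fun k => z (φ k)) atTop (𝓝 x) := by
    rw [tendsto_iff_dist_tendsto_zero]
    apply squeeze_zero (fun k => dist_nonneg)
      (g := fun k : ℕ => 1 / ((k : ℝ) + 1))
    · intro k
      have h1 := hzdist (φ k)
      have h2' : k ≤ φ k := hφmono.le_apply
      have h2 : (k : ℝ) + 1 ≤ (φ k : ℝ) + 1 := by
        have : (k:ℝ) ≤ (φ k : ℝ) := by exact_mod_cast h2'
        linarith
      have h3 : 1 / ((φ k : ℝ) + 1) ≤ 1 / ((k : ℝ) + 1) :=
        one_div_le_one_div_of_le (by positivity) h2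
      linarith
    · exact tendsto_one_div_succ
  -- νl ≠ 0
  have hνlne : νl ≠ 0 := by
    intro h0
    have hn : Tendsto (fun k => ‖νn (φ k)‖) atTop (𝓝 ‖νl‖) :=
      (continuous_norm.tendsto νl).comp hφtend
    have hn1 : Tendsto (fun k : ℕ => (1 : ℝ)) atTop (𝓝 ‖νl‖) := by
      convert hn using 1
      ext k
      exact (hνnorm (φ k)).symm
    have := tendsto_nhds_unique hn1 tendsto_const_nhds
    rw [h0, norm_zero] at this
    norm_num at this
  refine ⟨νl, hνlne, fun w hw => ?_⟩
  have hkey : ∀ k, 0 ≤ dot (νn (φ k)) (w - z (φ k)) := by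
    intro k
    rw [hνn]
    simp only
    rw [dot_smul_left]
    have h1 := hνpos (φ k) w hw
    have h2 : (0:ℝ) ≤ ‖ν (φ k)‖⁻¹ := inv_nonneg.2 (norm_nonneg _)
    positivity
  have htd : Tendsto (fun k => dot (νn (φ k)) (w - z (φ k))) atTop (𝓝 (dot νl (w - x))) :=
    tendsto_dot hφtend (tendsto_const_nhds.sub hztend)
  have : 0 ≤ dot νl (w - x) := ge_of_tendsto' htd hkey
  rw [dot_sub_right] at this
  linarith

/-- if a linear form is nonneg on the generators, it is nonneg on the closed cone -/
lemma posCone_halfplane {T : Set (ℝ × ℝ)} {ξ : ℝ × ℝ}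
    (h : ∀ u ∈ T, 0 ≤ dot ξ u) : posCone T ⊆ {v : ℝ × ℝ | 0 ≤ dot ξ v} := by
  apply closure_minimal
  · rintro v ⟨t, ht, u, hu, rfl⟩
    have := h u hu
    simp only [Set.mem_setOf_eq, dot_smul_right]
    positivity
  · have : Continuous fun v : ℝ × ℝ => dot ξ v := by
      simp only [dot]; fun_prop
    exact isClosed_le continuous_const this

/-- Direction 1 : failure of (*) for Ω implies failure of (**) for the antipolar -/
lemma forwardDir {Ω : Set (ℝ × ℝ)} (hΩ : PropI Ω) (hns : ¬ PropStar Ω) :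
    ¬ PropSS (antipolar Ω) := by
  obtain ⟨hne, hconv, hcl, h0, hray⟩ := hΩ
  unfold PropStar at hns
  push_neg at hns
  obtain ⟨c, hc, hcne⟩ := hns
  obtain ⟨x, hxc, hxf⟩ := hcne
  obtain ⟨ω, hω, rfl⟩ := hxc
  have hωne : ω ≠ 0 := fun h => h0 (h ▸ hω)
  obtain ⟨ν, hν0, hsupp⟩ := support_frontier hconv hcl ⟨ω, hω⟩ hxf
  have hnn : ∀ w ∈ Ω, 0 ≤ dot ν w := ray_nonneg hray hsupp
  have hνω : dot ν ω = 0 := by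
    have h1 := hsupp ω hω
    rw [dot_smul_right] at h1
    have h2 := hnn ω hω
    nlinarith
  set e : ℝ × ℝ := Jm ν with he
  obtain ⟨u₀, hu₀⟩ := antipolar_nonempty ⟨hne, hconv, hcl, h0, hray⟩
  -- the halfplane fact for the cone of the antipolar
  have hcone_sub : posCone (antipolar Ω) ⊆ {v : ℝ × ℝ | 0 ≤ dot (Jm ω) v} := by
    apply posCone_halfplane
    intro u hu
    rw [dot_Jm_swap]
    have := mem_antipolar.mp hu ω hω
    linarith
  have hbrd : IsBoundaryRayDir (posCone (antipolar Ω)) e := by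
    constructor
    · rw [he, Ne, Jm_eq_zero]; exact hν0
    · intro t ht
      have hPC : IsClosed (posCone (antipolar Ω)) := by
        unfold posCone; exact isClosed_closure
      rw [IsClosed.frontier_eq hPC]
      constructor
      · -- membership in the closed cone
        unfold posCone
        have h1 : Tendsto (fun k : ℕ => t • e + (1 / ((k:ℝ)+1)) • u₀) atTop (𝓝 (t • e)) := by
          have h2 : Tendsto (fun k : ℕ => (1 / ((k:ℝ)+1)) • u₀) atTop (𝓝 (0 : ℝ × ℝ)) := by
            have := tendsto_one_div_succ.smul_const u₀
            simpa using this
          have := (tendsto_const_nhds (x := t • e) (f := atTop (α := ℕ))).add h2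
          simpa using this
        refine mem_closure_of_tendsto h1 (Filter.Eventually.of_forall fun k => ?_)
        refine ⟨1 / ((k:ℝ)+1), by positivity, (t * ((k:ℝ)+1)) • e + u₀, ?_, ?_⟩
        · rw [mem_antipolar]
          intro w hw
          have e1 : dot (Jm ((t * ((k:ℝ)+1)) • e + u₀)) w
              = (t * ((k:ℝ)+1)) * dot ν w + dot (Jm u₀) w := by
            rw [he]; simp [Jm, dot, Prod.smul_def, smul_eq_mul]; ring
          rw [e1]
          have h1 := mem_antipolar.mp hu₀ w hw
          have h2 := hnn w hw
          have h3 : (0:ℝ) ≤ t * ((k:ℝ)+1) := by positivity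
          nlinarith
        · have hcoef : (1 / ((k:ℝ)+1)) * (t * ((k:ℝ)+1)) = t := by field_simp
          rw [smul_add, smul_smul, hcoef]
      · -- not in the interior
        intro hint
        have hz : dot (Jm ω) (t • e) = 0 := by
          rw [he]
          simp only [dot, Jm, Prod.smul_def, smul_eq_mul]
          simp only [dot] at hνω
          linear_combination t * hνω
        exact not_interior_of_halfplane hcone_sub
          (by rw [Ne, Jm_eq_zero]; exact hωne) hz hint
  intro hss
  set S : ℝ := |ω.1| + |ω.2| with hS
  have hSpos : 0 < S := abs_sum_pos hωne
  have hcpos : (0:ℝ) < c := by linarith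
  obtain ⟨t, ht, u, hu, hdist⟩ := hss e hbrd (1 / (c * S)) (by positivity)
  -- contradiction
  have h1 : 1 ≤ dot (Jm u) (c • ω) := mem_antipolar.mp hu _ (hray c hc (Set.smul_mem_smul_set hω))
  rw [dot_smul_right] at h1
  have h2 : 1 / c ≤ dot (Jm u) ω := by
    rw [div_le_iff₀ hcpos] at *
    linarith [h1]
  have h3 : dot (Jm ω) (t • e) = 0 := by
    rw [he]
    simp only [dot, Jm, Prod.smul_def, smul_eq_mul]
    simp only [dot] at hνω
    linear_combination t * hνω
  have h4 : |dot (Jm ω) (t • e - u)| ≤ S * ‖t • e - u‖ := by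
    have := abs_dot_le (Jm ω) (t • e - u)
    have e1 : |(Jm ω).1| + |(Jm ω).2| = S := by simp [Jm, hS]
    rwa [e1] at this
  rw [dot_sub_right, h3, zero_sub, abs_neg] at h4
  have h9 : dot (Jm ω) u = dot (Jm u) ω := dot_Jm_swap ω u
  rw [h9] at h4
  have h5 : 1 / c ≤ |dot (Jm u) ω| := le_trans h2 (le_abs_self _)
  have h6 : ‖t • e - u‖ < 1 / (c * S) := by
    rw [← dist_eq_norm]
    exact hdist
  have h7 : S * ‖t • e - u‖ < S * (1 / (c * S)) := by
    apply mul_lt_mul_of_pos_left h6 hSpos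
  have h8 : S * (1 / (c * S)) = 1 / c := by field_simp
  have hfin := lt_of_le_of_lt (le_trans h5 h4) h7
  rw [h8] at hfin
  exact lt_irrefl _ hfin

lemma dot_neg_left (a b : ℝ × ℝ) : dot (-a) b = -dot a b := by simp [dot]; ring

lemma dot_neg_right (a b : ℝ × ℝ) : dot a (-b) = -dot a b := by simp [dot]; ring

/-- Bolzano–Weierstrass attainment -/
lemma attain {Ω : Set (ℝ × ℝ)} (hcl : IsClosed Ω) {n : ℝ × ℝ}
    (hpos : ∀ w ∈ Ω, 0 < dot n w)
    (w : ℕ → ℝ × ℝ) (hwΩ : ∀ j, w j ∈ Ω) (hwb : ∀ j, dot n (w j) < 1 / ((j:ℝ)+1))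
    {R : ℝ} (hR : ∀ j, ‖w j‖ ≤ R) : False := by
  have hmem : ∀ j, w j ∈ Metric.closedBall (0 : ℝ × ℝ) R := by
    intro j; rw [Metric.mem_closedBall, dist_zero_right]; exact hR j
  obtain ⟨a, _, φ, hφmono, hφtend⟩ :=
    tendsto_subseq_of_bounded Metric.isBounded_closedBall hmem
  have haΩ : a ∈ Ω := hcl.mem_of_tendsto hφtend (Filter.Eventually.of_forall fun k => hwΩ (φ k))
  have htd : Tendsto (fun k => dot n (w (φ k))) atTop (𝓝 (dot n a)) :=
    tendsto_dot tendsto_const_nhds hφtend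
  have htd0 : Tendsto (fun k => dot n (w (φ k))) atTop (𝓝 0) := by
    apply squeeze_zero (fun k => (hpos _ (hwΩ (φ k))).le)
      (g := fun k : ℕ => 1 / ((k:ℝ)+1))
    · intro k
      have h1 := hwb (φ k)
      have h2' : k ≤ φ k := hφmono.le_apply
      have h2 : (k:ℝ) + 1 ≤ (φ k : ℝ) + 1 := by
        have : (k:ℝ) ≤ (φ k : ℝ) := by exact_mod_cast h2'
        linarith
      have h3 : 1 / ((φ k : ℝ) + 1) ≤ 1 / ((k : ℝ) + 1) :=
        one_div_le_one_div_of_le (by positivity) h2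
      linarith
    · exact tendsto_one_div_succ
  have := tendsto_nhds_unique htd htd0
  exact absurd this (ne_of_gt (hpos a haΩ))

/-- Key construction -/
lemma lemmaK {Ω : Set (ℝ × ℝ)} (hΩ : PropI Ω) {n : ℝ × ℝ} (hn : n ≠ 0)
    (hpos : ∀ w ∈ Ω, 0 < dot n w) (hinf : ∀ δ : ℝ, 0 < δ → ∃ w ∈ Ω, dot n w < δ)
    {ε : ℝ} (hε : 0 < ε) :
    ∃ t : ℝ, 0 ≤ t ∧ ∃ m : ℝ × ℝ, (∀ w ∈ Ω, 1 ≤ dot m w) ∧ ‖m - t • n‖ < ε := by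
  obtain ⟨hne, hconv, hcl, h0, hray⟩ := hΩ
  obtain ⟨w₁, hw₁⟩ := hne
  have hnsq : 0 < n.1 ^ 2 + n.2 ^ 2 := by
    have : n.1 ≠ 0 ∨ n.2 ≠ 0 := by
      by_contra hcon; push_neg at hcon; exact hn (Prod.ext hcon.1 hcon.2)
    rcases this with h | h <;> positivity
  obtain ⟨r, hrdef⟩ : ∃ x : ℝ, x = Real.sqrt (n.1 ^ 2 + n.2 ^ 2) := ⟨_, rfl⟩
  have hr : 0 < r := hrdef ▸ Real.sqrt_pos.2 hnsq
  have hr2 : r ^ 2 = n.1 ^ 2 + n.2 ^ 2 := by rw [hrdef]; exact Real.sq_sqrt hnsq.le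
  obtain ⟨nh, hnh⟩ : ∃ x : ℝ × ℝ, x = r⁻¹ • n := ⟨_, rfl⟩
  obtain ⟨d0, hd0⟩ : ∃ x : ℝ × ℝ, x = r⁻¹ • (-n.2, n.1) := ⟨_, rfl⟩
  have habs1 : |n.1| ≤ r := by
    rw [hrdef, ← Real.sqrt_sq_eq_abs]
    exact Real.sqrt_le_sqrt (by nlinarith)
  have habs2 : |n.2| ≤ r := by
    rw [hrdef, ← Real.sqrt_sq_eq_abs]
    exact Real.sqrt_le_sqrt (by nlinarith)
  have hnh1 : nh.1 = r⁻¹ * n.1 := by rw [hnh]; rfl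
  have hnh2 : nh.2 = r⁻¹ * n.2 := by rw [hnh]; rfl
  have hd01 : d0.1 = r⁻¹ * -n.2 := by rw [hd0]; rfl
  have hd02 : d0.2 = r⁻¹ * n.1 := by rw [hd0]; rfl
  have hnormnh : ‖nh‖ ≤ 1 := by
    apply norm_pair_le
    · rw [hnh1, abs_mul, abs_inv, abs_of_pos hr, inv_mul_le_iff₀ hr]
      simpa using habs1
    · rw [hnh2, abs_mul, abs_inv, abs_of_pos hr, inv_mul_le_iff₀ hr]
      simpa using habs2
  have hnormd0 : ‖d0‖ ≤ 1 := by
    apply norm_pair_le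
    · rw [hd01, abs_mul, abs_inv, abs_of_pos hr, abs_neg, inv_mul_le_iff₀ hr]
      simpa using habs2
    · rw [hd02, abs_mul, abs_inv, abs_of_pos hr, inv_mul_le_iff₀ hr]
      simpa using habs1
  have hdotnh : ∀ v : ℝ × ℝ, dot nh v = r⁻¹ * dot n v := by
    intro v; rw [hnh]; exact dot_smul_left _ _ _
  have hnd0 : dot n d0 = 0 := by
    show n.1 * d0.1 + n.2 * d0.2 = 0
    rw [hd01, hd02]; ring
  -- orthonormal decomposition
  have hdecomp : ∀ v : ℝ × ℝ, v = dot d0 v • d0 + dot nh v • nh := by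
    intro v
    have hrne : r ≠ 0 := ne_of_gt hr
    apply Prod.ext
    · show v.1 = (dot d0 v • d0 + dot nh v • nh).1
      have : (dot d0 v • d0 + dot nh v • nh).1 = dot d0 v * d0.1 + dot nh v * nh.1 := rfl
      rw [this]
      have e1 : dot d0 v = r⁻¹ * -n.2 * v.1 + r⁻¹ * n.1 * v.2 := by
        show d0.1 * v.1 + d0.2 * v.2 = _
        rw [hd01, hd02]
      have e2 : dot nh v = r⁻¹ * n.1 * v.1 + r⁻¹ * n.2 * v.2 := by
        show nh.1 * v.1 + nh.2 * v.2 = _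
        rw [hnh1, hnh2]
      rw [e1, e2, hd01, hnh1]
      have : (r⁻¹ * -n.2 * v.1 + r⁻¹ * n.1 * v.2) * (r⁻¹ * -n.2)
          + (r⁻¹ * n.1 * v.1 + r⁻¹ * n.2 * v.2) * (r⁻¹ * n.1)
          = r⁻¹ ^ 2 * (n.1 ^ 2 + n.2 ^ 2) * v.1 := by ring
      rw [this, ← hr2]
      field_simp
    · show v.2 = (dot d0 v • d0 + dot nh v • nh).2
      have : (dot d0 v • d0 + dot nh v • nh).2 = dot d0 v * d0.2 + dot nh v * nh.2 := rfl
      rw [this]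
      have e1 : dot d0 v = r⁻¹ * -n.2 * v.1 + r⁻¹ * n.1 * v.2 := by
        show d0.1 * v.1 + d0.2 * v.2 = _
        rw [hd01, hd02]
      have e2 : dot nh v = r⁻¹ * n.1 * v.1 + r⁻¹ * n.2 * v.2 := by
        show nh.1 * v.1 + nh.2 * v.2 = _
        rw [hnh1, hnh2]
      rw [e1, e2, hd02, hnh2]
      have : (r⁻¹ * -n.2 * v.1 + r⁻¹ * n.1 * v.2) * (r⁻¹ * n.1)
          + (r⁻¹ * n.1 * v.1 + r⁻¹ * n.2 * v.2) * (r⁻¹ * n.2)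
          = r⁻¹ ^ 2 * (n.1 ^ 2 + n.2 ^ 2) * v.2 := by ring
      rw [this, ← hr2]
      field_simp
  -- Step A : choose the correct lateral direction
  have hA : ∃ d : ℝ × ℝ, (d = d0 ∨ d = -d0) ∧
      ∀ M δ : ℝ, 0 < δ → ∃ w ∈ Ω, dot n w < δ ∧ M < dot d w := by
    by_contra hcon
    push_neg at hcon
    obtain ⟨M₁, δ₁, hδ₁, hb₁⟩ := hcon d0 (Or.inl rfl)
    obtain ⟨M₂, δ₂, hδ₂, hb₂⟩ := hcon (-d0) (Or.inr rfl)
    obtain ⟨δ, hδdef⟩ : ∃ x : ℝ, x = min (min δ₁ δ₂) 1 := ⟨_, rfl⟩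
    have hδpos : 0 < δ := hδdef ▸ lt_min (lt_min hδ₁ hδ₂) one_pos
    have hseq : ∀ j : ℕ, ∃ w ∈ Ω, dot n w < δ / ((j:ℝ)+1) := fun j => hinf _ (by positivity)
    choose w hwΩ hwlt using hseq
    have hδle : ∀ j : ℕ, δ / ((j:ℝ)+1) ≤ δ := by
      intro j
      rw [div_le_iff₀ (by positivity)]
      nlinarith [hδpos, Nat.cast_nonneg (α := ℝ) j]
    have hkey : ∀ j, ‖w j‖ ≤ (|M₁| + |M₂|) + r⁻¹ := by
      intro j
      have hwδ : dot n (w j) < δ := lt_of_lt_of_le (hwlt j) (hδle j)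
      have h1 : dot d0 (w j) ≤ M₁ :=
        hb₁ (w j) (hwΩ j) (lt_of_lt_of_le hwδ (hδdef ▸ le_trans (min_le_left _ _) (min_le_left _ _)))
      have h2 : dot (-d0) (w j) ≤ M₂ :=
        hb₂ (w j) (hwΩ j) (lt_of_lt_of_le hwδ (hδdef ▸ le_trans (min_le_left _ _) (min_le_right _ _)))
      rw [dot_neg_left] at h2
      have habsa : |dot d0 (w j)| ≤ |M₁| + |M₂| := by
        rw [abs_le]
        constructor
        · have h3 := le_abs_self M₂
          have h4 := abs_nonneg M₁
          linarith
        · have h3 := le_abs_self M₁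
          have h4 := abs_nonneg M₂
          linarith
      have hbpos := hpos (w j) (hwΩ j)
      have habsb : |dot nh (w j)| ≤ r⁻¹ := by
        rw [hdotnh, abs_mul, abs_inv, abs_of_pos hr]
        have hδ1 : dot n (w j) < 1 := lt_of_lt_of_le hwδ (hδdef ▸ min_le_right (min δ₁ δ₂) 1)
        rw [abs_of_pos hbpos]
        exact mul_le_of_le_one_right (inv_nonneg.2 hr.le) hδ1.le
      calc ‖w j‖ = ‖dot d0 (w j) • d0 + dot nh (w j) • nh‖ := by rw [← hdecomp (w j)]
        _ ≤ ‖dot d0 (w j) • d0‖ + ‖dot nh (w j) • nh‖ := norm_add_le _ _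
        _ = |dot d0 (w j)| * ‖d0‖ + |dot nh (w j)| * ‖nh‖ := by
            rw [norm_smul, norm_smul, Real.norm_eq_abs, Real.norm_eq_abs]
        _ ≤ (|M₁| + |M₂|) * 1 + r⁻¹ * 1 := by
            apply add_le_add
            · exact mul_le_mul habsa hnormd0 (norm_nonneg _) (by positivity)
            · exact mul_le_mul habsb hnormnh (norm_nonneg _) (by positivity)
        _ = (|M₁| + |M₂|) + r⁻¹ := by ring
    have hwb : ∀ j, dot n (w j) < 1 / ((j:ℝ)+1) := by
      intro j
      have h1 : δ ≤ 1 := hδdef ▸ min_le_right (min δ₁ δ₂) 1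
      have h2 : δ / ((j:ℝ)+1) ≤ 1 / ((j:ℝ)+1) := by gcongr
      linarith [hwlt j]
    exact attain hcl hpos w hwΩ hwb hkey
  obtain ⟨d, hdor, hAd⟩ := hA
  have hnd : dot n d = 0 := by
    rcases hdor with rfl | rfl
    · exact hnd0
    · rw [dot_neg_right, hnd0]; ring
  have hnormd : ‖d‖ ≤ 1 := by
    rcases hdor with rfl | rfl
    · exact hnormd0
    · rw [norm_neg]; exact hnormd0
  have hdecd : ∀ v : ℝ × ℝ, v = dot d v • d + dot nh v • nh := by
    rcases hdor with rfl | rfl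
    · exact hdecomp
    · intro v
      have h := hdecomp v
      calc v = dot d0 v • d0 + dot nh v • nh := h
        _ = dot (-d0) v • -d0 + dot nh v • nh := by rw [dot_neg_left]; module
  -- the sequence going to infinity laterally
  have hseq : ∀ j : ℕ, ∃ w ∈ Ω, dot n w < r / ((j:ℝ)+1) ∧ (j:ℝ) < dot d w :=
    fun j => hAd (j:ℝ) (r / ((j:ℝ)+1)) (by positivity)
  choose ws hwsΩ hws1 hws2 using hseq
  -- Step B : recession direction
  have hrec : ∀ σ : ℝ, 0 ≤ σ → w₁ + σ • d ∈ Ω := by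
    intro σ hσ
    obtain ⟨K₀, hK₀⟩ := exists_nat_gt (max (σ + dot d w₁) (dot d w₁ + 1))
    have hK₁ : σ + dot d w₁ < (K₀:ℝ) := lt_of_le_of_lt (le_max_left _ _) hK₀
    have hK₂ : dot d w₁ + 1 < (K₀:ℝ) := lt_of_le_of_lt (le_max_right _ _) hK₀
    -- for every k the index j = k + K₀
    have hdenom : ∀ k : ℕ, (k:ℝ) + 1 < dot d (ws (k + K₀)) - dot d w₁ := by
      intro k
      have h1 := hws2 (k + K₀)
      have h2 : ((k + K₀ : ℕ):ℝ) = (k:ℝ) + (K₀:ℝ) := by push_cast; ring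
      rw [h2] at h1
      linarith
    have hdenomσ : ∀ k : ℕ, σ < dot d (ws (k + K₀)) - dot d w₁ := by
      intro k
      have h1 := hws2 (k + K₀)
      have h2 : ((k + K₀ : ℕ):ℝ) = (k:ℝ) + (K₀:ℝ) := by push_cast; ring
      rw [h2] at h1
      have h3 : (0:ℝ) ≤ (k:ℝ) := Nat.cast_nonneg k
      linarith
    have hdenompos : ∀ k : ℕ, 0 < dot d (ws (k + K₀)) - dot d w₁ := by
      intro k
      have := hdenom k
      have h3 : (0:ℝ) ≤ (k:ℝ) := Nat.cast_nonneg k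
      linarith
    obtain ⟨μ, hμ⟩ : ∃ f : ℕ → ℝ, ∀ k, f k = σ / (dot d (ws (k + K₀)) - dot d w₁) :=
      ⟨_, fun k => rfl⟩
    have hμ0 : ∀ k, 0 ≤ μ k := fun k => (hμ k) ▸ div_nonneg hσ (hdenompos k).le
    have hμ1 : ∀ k, μ k ≤ 1 := by
      intro k
      rw [hμ k, div_le_one (hdenompos k)]
      exact (hdenomσ k).le
    obtain ⟨pp, hpp⟩ : ∃ f : ℕ → ℝ × ℝ, ∀ k, f k = (1 - μ k) • w₁ + μ k • ws (k + K₀) :=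
      ⟨_, fun k => rfl⟩
    have hppΩ : ∀ k, pp k ∈ Ω := by
      intro k
      rw [hpp k]
      exact hconv hw₁ (hwsΩ (k + K₀)) (by linarith [hμ1 k]) (hμ0 k) (by ring)
    have hμden : ∀ k, μ k * (dot d (ws (k + K₀)) - dot d w₁) = σ := by
      intro k
      rw [hμ k]
      exact div_mul_cancel₀ _ (ne_of_gt (hdenompos k))
    have hkeyeq : ∀ k, pp k - (w₁ + σ • d) = (μ k * (dot nh (ws (k + K₀)) - (dot nh w₁))) • nh := by
      intro k
      have hv := hdecd (ws (k + K₀) - w₁)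
      rw [dot_sub_right, dot_sub_right] at hv
      calc pp k - (w₁ + σ • d) = μ k • (ws (k + K₀) - w₁) - σ • d := by
            rw [hpp k]; module
        _ = μ k • ((dot d (ws (k + K₀)) - dot d w₁) • d
              + (dot nh (ws (k + K₀)) - (dot nh w₁)) • nh) - σ • d := by rw [← hv]
        _ = (μ k * (dot d (ws (k + K₀)) - dot d w₁) - σ) • d
              + (μ k * (dot nh (ws (k + K₀)) - (dot nh w₁))) • nh := by module
        _ = (μ k * (dot nh (ws (k + K₀)) - (dot nh w₁))) • nh := by rw [hμden k]; module
    have hbk : ∀ k, |dot nh (ws (k + K₀)) - (dot nh w₁)| ≤ 1 + |(dot nh w₁)| := by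
      intro k
      have hp1 : 0 < dot nh (ws (k + K₀)) := by
        rw [hdotnh]
        exact mul_pos (inv_pos.2 hr) (hpos _ (hwsΩ _))
      have hp2 : dot nh (ws (k + K₀)) ≤ 1 := by
        rw [hdotnh]
        have h1 := hws1 (k + K₀)
        have h2 : r / (((k + K₀ : ℕ):ℝ)+1) ≤ r := by
          rw [div_le_iff₀ (by positivity)]
          nlinarith [hr, Nat.cast_nonneg (α := ℝ) (k + K₀)]
        have h3 : dot n (ws (k + K₀)) ≤ r := by linarith
        rw [inv_mul_le_iff₀ hr]
        linarith
      rw [abs_le]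
      constructor
      · have := le_abs_self (dot nh w₁); linarith
      · have := neg_abs_le (dot nh w₁); linarith
    have hμle : ∀ k, μ k ≤ σ / ((k:ℝ)+1) := by
      intro k
      rw [hμ k]
      exact div_le_div_of_nonneg_left hσ (by positivity) (hdenom k).le
    have hdistle : ∀ k, dist (pp k) (w₁ + σ • d) ≤ (σ * (1 + |(dot nh w₁)|)) * (1 / ((k:ℝ)+1)) := by
      intro k
      rw [dist_eq_norm, hkeyeq k, norm_smul, Real.norm_eq_abs]
      have h1 : |μ k * (dot nh (ws (k + K₀)) - (dot nh w₁))| ≤ (σ / ((k:ℝ)+1)) * (1 + |(dot nh w₁)|) := by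
        rw [abs_mul, abs_of_nonneg (hμ0 k)]
        apply mul_le_mul (hμle k) (hbk k) (abs_nonneg _) (by positivity)
      have h2 : |μ k * (dot nh (ws (k + K₀)) - (dot nh w₁))| * ‖nh‖ ≤ (σ / ((k:ℝ)+1)) * (1 + |(dot nh w₁)|) * 1 := by
        apply mul_le_mul h1 hnormnh (norm_nonneg _) (by positivity)
      calc |μ k * (dot nh (ws (k + K₀)) - (dot nh w₁))| * ‖nh‖
          ≤ (σ / ((k:ℝ)+1)) * (1 + |(dot nh w₁)|) * 1 := h2
        _ = (σ * (1 + |(dot nh w₁)|)) * (1 / ((k:ℝ)+1)) := by ring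
    have htend : Tendsto pp atTop (𝓝 (w₁ + σ • d)) := by
      rw [tendsto_iff_dist_tendsto_zero]
      apply squeeze_zero (fun k => dist_nonneg) hdistle
      have := tendsto_one_div_succ.const_mul (σ * (1 + |(dot nh w₁)|))
      simpa using this
    exact hcl.mem_of_tendsto htend (Filter.Eventually.of_forall hppΩ)
  -- Step C : separation from a far point on the lateral ray
  have hb1pos : 0 < dot nh w₁ := by
    rw [hdotnh]
    exact mul_pos (inv_pos.2 hr) (hpos _ hw₁)
  obtain ⟨A, hAdef⟩ : ∃ x : ℝ, x = max (max (dot d w₁ + 1) (1/ε)) 1 := ⟨_, rfl⟩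
  have hA1 : (1:ℝ) ≤ A := hAdef ▸ le_max_right _ _
  have hAa1 : dot d w₁ + 1 ≤ A := hAdef ▸ le_trans (le_max_left _ _) (le_max_left _ _)
  have hAε : 1/ε ≤ A := hAdef ▸ le_trans (le_max_right _ _) (le_max_left _ _)
  have hApos : (0:ℝ) < A := lt_of_lt_of_le one_pos hA1
  have hzΩ : A • d ∉ Ω := by
    intro hzin
    have h1 := hpos _ hzin
    rw [dot_smul_right, hnd] at h1
    simp at h1
  obtain ⟨ν, s, hν1, hν2⟩ := sep_point hconv hcl hzΩ
  have hnnν : ∀ w ∈ Ω, 0 ≤ dot ν w := ray_nonneg hray fun w hw => (hν2 w hw).le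
  have hνd : dot ν d = dot d ν := dot_comm _ _
  have hνdec : ν = dot d ν • d + dot nh ν • nh := hdecd ν
  have hp0 : 0 ≤ dot d ν := by
    by_contra hcon
    push_neg at hcon
    have hw1ν : 0 ≤ dot ν w₁ := hnnν w₁ hw₁
    have hraymem := hrec ((dot ν w₁ + 1)/(-dot d ν))
      (div_nonneg (by linarith) (by linarith))
    have h1 := hnnν _ hraymem
    rw [dot_add_right, dot_smul_right, hνd] at h1
    have hpne : dot d ν ≠ 0 := ne_of_lt hcon
    have hpne' : -dot d ν ≠ 0 := neg_ne_zero.2 hpne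
    have h2 : (dot ν w₁ + 1)/(-dot d ν) * dot d ν = -(dot ν w₁ + 1) := by
      rw [div_mul_eq_mul_div, div_eq_iff hpne']
      ring
    rw [h2] at h1
    linarith
  have hνz : dot ν (A • d) = A * dot d ν := by rw [dot_smul_right, hνd]
  rw [hνz] at hν1
  have hνw₁ : dot ν w₁ = dot d ν * dot d w₁ + dot nh ν * dot nh w₁ := by
    have h := congrArg (fun u => dot u w₁) hνdec
    simpa only [dot_add_left, dot_smul_left] using h
  have hppos : 0 < dot d ν := by
    rcases lt_or_eq_of_le hp0 with h | h
    · exact h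
    · exfalso
      have hs0 : 0 < s := by rw [← h] at hν1; linarith [hν1]
      have hq0 : 0 < dot nh ν := by
        by_contra hq
        push_neg at hq
        have h1 := hν2 w₁ hw₁
        rw [hνw₁, ← h, zero_mul, zero_add] at h1
        have h5 : 0 ≤ (-dot nh ν) * dot nh w₁ := mul_nonneg (neg_nonneg.2 hq) hb1pos.le
        nlinarith
      obtain ⟨w₃, hw₃, hw₃lt⟩ := hinf (s * r / dot nh ν) (by positivity)
      have h1 := hν2 w₃ hw₃
      have h2 : dot ν w₃ = dot d ν * dot d w₃ + dot nh ν * dot nh w₃ := by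
        have h := congrArg (fun u => dot u w₃) hνdec
        simpa only [dot_add_left, dot_smul_left] using h
      rw [h2, ← h] at h1
      rw [hdotnh w₃] at h1
      have h3 : dot nh ν * (r⁻¹ * dot n w₃) < s := by
        have h4 : dot n w₃ < s * r / dot nh ν := hw₃lt
        have h5 : r⁻¹ * dot n w₃ < r⁻¹ * (s * r / dot nh ν) := by
          apply mul_lt_mul_of_pos_left h4 (inv_pos.2 hr)
        have h6 : dot nh ν * (r⁻¹ * dot n w₃) < dot nh ν * (r⁻¹ * (s * r / dot nh ν)) :=
          mul_lt_mul_of_pos_left h5 hq0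
        have h7 : dot nh ν * (r⁻¹ * (s * r / dot nh ν)) = s := by
          field_simp
        linarith
      linarith
  have hsp : A * dot d ν < s := hν1
  have hspos : 0 < s := lt_trans (by positivity) hsp
  have hqpos : 0 < dot nh ν := by
    have h1 := hν2 w₁ hw₁
    rw [hνw₁] at h1
    nlinarith [hb1pos, hAa1]
  refine ⟨dot nh ν / (s * r), by positivity, s⁻¹ • ν, fun w hw => ?_, ?_⟩
  · rw [dot_smul_left]
    have h1 := hν2 w hw
    rw [inv_mul_eq_div, le_div_iff₀ hspos]
    linarith
  · have hmt : s⁻¹ • ν - (dot nh ν / (s * r)) • n = (dot d ν / s) • d := by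
      have h1 : (dot nh ν / (s * r)) • n = (dot nh ν / s) • nh := by
        rw [hnh, smul_smul]
        congr 1
        field_simp
      rw [h1]
      calc s⁻¹ • ν - (dot nh ν / s) • nh
          = s⁻¹ • (dot d ν • d + dot nh ν • nh) - (dot nh ν / s) • nh := by rw [← hνdec]
        _ = (dot d ν / s) • d := by
            have hsne : s ≠ 0 := ne_of_gt hspos
            match_scalars <;> field_simp <;> ring
    rw [hmt, norm_smul, Real.norm_eq_abs, abs_of_pos (by positivity : 0 < dot d ν / s)]
    have h1 : dot d ν / s * ‖d‖ ≤ dot d ν / s := mul_le_of_le_one_right (by positivity) hnormd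
    have h2 : dot d ν / s < 1/A := by
      rw [div_lt_div_iff₀ hspos hApos]
      linarith
    have h3 : 1/A ≤ ε := by
      rw [div_le_iff₀ hApos]
      have h4 : 1 ≤ A * ε := by
        rw [div_le_iff₀ hε] at hAε
        linarith
      linarith
    linarith

/-- Direction 2 : failure of (**) for the antipolar implies failure of (*) for Ω -/
lemma backwardDir {Ω : Set (ℝ × ℝ)} (hΩ : PropI Ω) (hns : ¬ PropSS (antipolar Ω)) :
    ¬ PropStar Ω := by
  have hne := hΩ.1
  have hcl := hΩ.2.2.1
  have hray := hΩ.2.2.2.2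
  unfold PropSS at hns
  push_neg at hns
  obtain ⟨e, hbrd, ε, hε, hfar⟩ := hns
  obtain ⟨hene, hfr⟩ := hbrd
  -- n := Jm e ; nonnegativity of dot n on Ω
  have hnne : Jm e ≠ 0 := by rw [Ne, Jm_eq_zero]; exact hene
  have hD : posCone (antipolar Ω) ⊆ {v : ℝ × ℝ | ∀ w ∈ Ω, 0 ≤ dot (Jm v) w} := by
    apply closure_minimal
    · rintro v ⟨t, ht, u, hu, rfl⟩
      intro w hw
      have h1 := mem_antipolar.mp hu w hw
      have h2 : dot (Jm (t • u)) w = t * dot (Jm u) w := by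
        rw [Jm_smul, dot_smul_left]
      rw [h2]
      positivity
    · have : {v : ℝ × ℝ | ∀ w ∈ Ω, 0 ≤ dot (Jm v) w}
          = ⋂ w ∈ Ω, {v : ℝ × ℝ | 0 ≤ v.1 * w.1 - v.2 * w.2} := by
        ext v
        simp only [Set.mem_setOf_eq, Set.mem_iInter]
        constructor
        · intro h w hw; have := h w hw; simp only [dot, Jm] at this; linarith
        · intro h w hw; have := h w hw; simp only [dot, Jm]; linarith
      rw [this]
      refine isClosed_biInter fun w _ => ?_
      have : Continuous fun v : ℝ × ℝ => v.1 * w.1 - v.2 * w.2 := by fun_prop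
      exact isClosed_le continuous_const this
  have hepos : e ∈ posCone (antipolar Ω) := by
    have h1 := hfr 1 zero_le_one
    rw [one_smul] at h1
    have hPC : IsClosed (posCone (antipolar Ω)) := by
      unfold posCone; exact isClosed_closure
    rw [IsClosed.frontier_eq hPC] at h1
    exact h1.1
  have hnn : ∀ w ∈ Ω, 0 ≤ dot (Jm e) w := hD hepos
  -- the infimum is 0
  have hinf : ∀ δ : ℝ, 0 < δ → ∃ w ∈ Ω, dot (Jm e) w < δ := by
    intro δ hδ
    have ht2 : (0:ℝ) ≤ 2/δ := by positivity
    have hte : (2/δ) • e ∉ antipolar Ω := by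
      intro hmem
      have := hfar (2/δ) ht2 _ hmem
      simp at this
      linarith
    rw [mem_antipolar] at hte
    push_neg at hte
    obtain ⟨w, hw, hlt⟩ := hte
    refine ⟨w, hw, ?_⟩
    rw [Jm_smul, dot_smul_left] at hlt
    have hδ2 : (0:ℝ) < 2/δ := by positivity
    have h1 : dot (Jm e) w < 1 / (2/δ) := by
      rw [lt_div_iff₀ hδ2]
      linarith
    have h2 : 1 / (2/δ) = δ/2 := by field_simp
    rw [h2] at h1
    linarith
  -- case split on attainment
  rcases Classical.em (∃ ω ∈ Ω, dot (Jm e) ω = 0) with ⟨ω, hω, hω0⟩ | hnot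
  · -- attained : the ray through ω lies on the boundary
    intro hstar
    have h2 := hstar 2 one_lt_two
    have hmem1 : (2:ℝ) • ω ∈ (2:ℝ) • Ω := Set.smul_mem_smul_set hω
    have hmem2 : (2:ℝ) • ω ∈ frontier Ω := by
      rw [IsClosed.frontier_eq hcl]
      constructor
      · exact hray 2 one_lt_two hmem1
      · apply not_interior_of_halfplane (ξ := Jm e) (S := Ω) hnn hnne
        rw [dot_smul_right, hω0]; ring
    exact Set.eq_empty_iff_forall_notMem.mp h2 _ ⟨hmem1, hmem2⟩
  · -- not attained : use the key construction to contradict the distance bound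
    exfalso
    push_neg at hnot
    have hpos : ∀ w ∈ Ω, 0 < dot (Jm e) w := fun w hw =>
      lt_of_le_of_ne (hnn w hw) (Ne.symm (hnot w hw))
    obtain ⟨t, ht, m, hm, hnorm⟩ := lemmaK hΩ hnne hpos hinf hε
    have humem : Jm m ∈ antipolar Ω := by
      rw [mem_antipolar]
      intro w hw
      rw [Jm_Jm]
      exact hm w hw
    have hfar2 := hfar t ht _ humem
    have heq : dist (t • e) (Jm m) = ‖m - t • Jm e‖ := by
      rw [dist_eq_norm]
      have h1 : t • e - Jm m = -(Jm (m - t • Jm e)) := by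
        rw [Jm_sub, Jm_smul, Jm_Jm]
        abel
      rw [h1, norm_neg, norm_Jm]
    rw [heq] at hfar2
    linarith
  
/-- the main equivalence for a single set -/
lemma main_iff {Ω : Set (ℝ × ℝ)} (hΩ : PropI Ω) : PropStar Ω ↔ PropSS (antipolar Ω) := by
  constructor
  · intro h
    by_contra hss
    exact (backwardDir hΩ hss) h
  · intro h
    by_contra hstar
    exact (forwardDir hΩ hstar) h

end DP

/-- Duality of the properties (*) and (**): for `Ω` satisfying property (i),
`Ω` has (*) iff `Ω^◇` has (**), and `Ω^◇` has (*) iff `Ω` has (**). -/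
theorem dual_properties (Ω : Set (ℝ × ℝ)) (hΩ : PropI Ω) :
    (PropStar Ω ↔ PropSS (antipolar Ω)) ∧
      (PropStar (antipolar Ω) ↔ PropSS Ω) := by
  constructor
  · exact DP.main_iff hΩ
  · have h2 := DP.main_iff (DP.antipolar_propI hΩ)
    rwa [DP.bipolar hΩ] at h2
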